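/- Suppose b1 ≤ b2. Then for x ≥ 2, Σ_{n ≤ x} f_b(n) = x·Π_p (1 − p^{−(b1+b2)}) + O(log x), where the product is over all primes and the implied constant depends only on b. -/

import Mathlib

open Finset Real

/-- `f_b(n) = ∑_{d^{b1} ∣ n} μ(d) / d^{b2}`. -/
def fb (b1 b2 : ℕ) (n : ℕ) : ℚ :=
  ∑ d ∈ n.divisors.filter (fun d => d ^ b1 ∣ n),
    (ArithmeticFunction.moebius d : ℚ) / (d : ℚ) ^ b2

private lemma mu_abs_le (d : ℕ) : |((ArithmeticFunction.moebius d : ℤ) : ℝ)| ≤ 1 := by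
  rcases eq_or_ne (ArithmeticFunction.moebius d) 0 with h | h
  · simp [h]
  · rcases ArithmeticFunction.moebius_ne_zero_iff_eq_or.mp h with h | h <;> simp [h]

private lemma abs_mu_le_inv_sq (k : ℕ) (hk : 2 ≤ k) {d : ℕ} (hd : 0 < d) :
    |((ArithmeticFunction.moebius d : ℤ) : ℝ) / (d : ℝ) ^ k| ≤ ((d : ℝ) ^ 2)⁻¹ := by
  have hd1 : (1 : ℝ) ≤ d := by exact_mod_cast hd
  rw [abs_div, abs_pow, abs_of_nonneg (by positivity : (0:ℝ) ≤ (d:ℝ)), ← one_div]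
  exact div_le_div₀ (by norm_num) (mu_abs_le d) (by positivity) (pow_le_pow_right₀ hd1 hk)

private lemma summable_abs_mu (k : ℕ) (hk : 2 ≤ k) :
    Summable (fun d : ℕ => |((ArithmeticFunction.moebius d : ℤ) : ℝ) / (d : ℝ) ^ k|) := by
  apply Summable.of_nonneg_of_le (fun d => abs_nonneg _) (fun d => ?_)
    (summable_one_div_nat_pow.mpr (by norm_num : 1 < 2))
  rcases Nat.eq_zero_or_pos d with rfl | hd
  · simp [zero_pow (by omega : k ≠ 0)]
  · rw [one_div]
    exact abs_mu_le_inv_sq k hk hd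

private lemma tail_bound (k : ℕ) (hk : 2 ≤ k) (N : ℕ) (hN : 2 ≤ N) :
    |(∑' d : ℕ, ((ArithmeticFunction.moebius d : ℤ) : ℝ) / (d : ℝ) ^ k) -
      ∑ d ∈ Icc 1 N, ((ArithmeticFunction.moebius d : ℤ) : ℝ) / (d : ℝ) ^ k| ≤ 1 / N := by
  set f : ℕ → ℝ := fun d => ((ArithmeticFunction.moebius d : ℤ) : ℝ) / (d : ℝ) ^ k with hf
  have habs : Summable (fun d => |f d|) := summable_abs_mu k hk
  have hnorm : Summable (fun d => ‖f d‖) := by simpa [Real.norm_eq_abs] using habs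
  have hsumf : Summable f := habs.of_abs
  set Sc : Set ℕ := (((Icc 1 N : Finset ℕ) : Set ℕ))ᶜ with hSc
  have hcompl := Summable.sum_add_tsum_compl (s := Icc 1 N) hsumf
  have heq : (∑' d, f d) - ∑ d ∈ Icc 1 N, f d
      = ∑' i : Sc, f ↑i := by
    rw [← hcompl]; ring
  rw [heq]
  have hsubn : Summable (fun i : Sc => ‖f ↑i‖) := hnorm.subtype _
  calc |∑' i : Sc, f ↑i|
      ≤ ∑' i : Sc, ‖f ↑i‖ := by
        simpa [Real.norm_eq_abs] using norm_tsum_le_tsum_norm hsubn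
    _ ≤ 1 / N := by
        apply Summable.tsum_le_of_sum_le hsubn
        intro s
        have himg : ∑ d ∈ s.image Subtype.val, ‖f d‖ = ∑ i ∈ s, ‖f ↑i‖ :=
          Finset.sum_image (fun i _ j _ h => Subtype.val_injective h)
        rw [← himg]
        set t := s.image Subtype.val with ht
        have htmem : ∀ d ∈ t, d ∉ Icc 1 N := by
          intro d hd
          rw [ht, Finset.mem_image] at hd
          obtain ⟨i, _, rfl⟩ := hd
          have := i.2
          simpa [hSc] using this
        set M := max (t.sup id) N with hM
        have hsub : t.filter (fun d => 0 < d) ⊆ Ioc N M := by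
          intro d hd
          rw [mem_filter] at hd
          have h1 := htmem d hd.1
          rw [mem_Icc] at h1
          push_neg at h1
          rw [mem_Ioc]
          exact ⟨h1 hd.2, le_trans (Finset.le_sup (f := id) hd.1) (le_max_left _ _)⟩
        calc ∑ d ∈ t, ‖f d‖ = ∑ d ∈ t.filter (fun d => 0 < d), ‖f d‖ := by
              rw [Finset.sum_filter_of_ne]
              intro d _ hfd
              rcases Nat.eq_zero_or_pos d with rfl | hd
              · exfalso; apply hfd; simp [hf, zero_pow (by omega : k ≠ 0)]
              · exact hd
          _ ≤ ∑ d ∈ t.filter (fun d => 0 < d), ((d:ℝ)^2)⁻¹ := by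
              apply Finset.sum_le_sum
              intro d hd
              rw [mem_filter] at hd
              rw [Real.norm_eq_abs]
              exact abs_mu_le_inv_sq k hk hd.2
          _ ≤ ∑ d ∈ Ioc N M, ((d:ℝ)^2)⁻¹ := by
              apply Finset.sum_le_sum_of_subset_of_nonneg hsub
              intro d _ _
              positivity
          _ ≤ (N:ℝ)⁻¹ - (M:ℝ)⁻¹ := sum_Ioc_inv_sq_le_sub (by omega) (le_max_right _ _)
          _ ≤ 1 / N := by
              rw [one_div]
              have : (0:ℝ) ≤ (M:ℝ)⁻¹ := by positivity
              linarith

private lemma euler_aux (k : ℕ) (hk : 2 ≤ k) :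
    ∏' p : Nat.Primes, (1 - 1 / (p : ℝ) ^ k) =
      ∑' d : ℕ, ((ArithmeticFunction.moebius d : ℤ) : ℝ) / (d : ℝ) ^ k := by
  set f : ℕ → ℝ := fun d => ((ArithmeticFunction.moebius d : ℤ) : ℝ) / (d : ℝ) ^ k with hf
  have hf₁ : f 1 = 1 := by simp [hf]
  have hmul : ∀ {m n : ℕ}, Nat.Coprime m n → f (m * n) = f m * f n := by
    intro m n hmn
    simp only [hf]
    rw [ArithmeticFunction.isMultiplicative_moebius.map_mul_of_coprime hmn]
    push_cast
    rw [mul_pow, mul_div_mul_comm]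
  have hsum : Summable (fun d => ‖f d‖) := by
    simpa [Real.norm_eq_abs] using
      (by
        apply Summable.of_nonneg_of_le (fun d => abs_nonneg _) (fun d => ?_)
          (summable_one_div_nat_pow.mpr (by norm_num : 1 < 2))
        rcases Nat.eq_zero_or_pos d with rfl | hd
        · simp [hf, zero_pow (by omega : k ≠ 0)]
        · have hd1 : (1 : ℝ) ≤ d := by exact_mod_cast hd
          rw [hf]
          rw [abs_div, abs_pow, abs_of_nonneg (by positivity : (0:ℝ) ≤ (d:ℝ))]
          have h2 : (d : ℝ) ^ 2 ≤ (d : ℝ) ^ k := pow_le_pow_right₀ hd1 hk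
          have hmu : |((ArithmeticFunction.moebius d : ℤ) : ℝ)| ≤ 1 := by
            rcases eq_or_ne (ArithmeticFunction.moebius d) 0 with h | h
            · simp [h]
            · rcases ArithmeticFunction.moebius_ne_zero_iff_eq_or.mp h with h | h <;> simp [h]
          exact div_le_div₀ (by norm_num) hmu (by positivity) h2
        : Summable (fun d : ℕ => |f d|))
  have hf₀ : f 0 = 0 := by simp [hf, zero_pow (by omega : k ≠ 0)]
  rw [← EulerProduct.eulerProduct_tprod hf₁ hmul hsum hf₀]
  congr 1
  funext p
  have hp : (p : ℕ).Prime := p.2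
  have hvanish : ∀ e ∉ ({0, 1} : Finset ℕ), f ((p : ℕ) ^ e) = 0 := by
    intro e he
    simp only [mem_insert, mem_singleton] at he
    have h2e : 2 ≤ e := by omega
    have : ¬ Squarefree ((p : ℕ) ^ e) := by
      intro hsq
      have hdvd : (p : ℕ) * (p : ℕ) ∣ (p : ℕ) ^ e := by
        rw [← sq]
        exact pow_dvd_pow _ h2e
      exact hp.one_lt.ne' (Nat.isUnit_iff.mp (hsq _ hdvd))
    simp [hf, ArithmeticFunction.moebius_eq_zero_of_not_squarefree this]
  rw [tsum_eq_sum hvanish]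
  rw [Finset.sum_pair (by norm_num : (0:ℕ) ≠ 1)]
  have h0 : f ((p : ℕ) ^ 0) = 1 := by rw [pow_zero]; exact hf₁
  have h1 : f ((p : ℕ) ^ 1) = -(1 / (p : ℝ) ^ k) := by
    rw [pow_one, hf]
    simp only
    rw [ArithmeticFunction.moebius_apply_prime hp]
    push_cast
    ring
  rw [h0, h1]
  ring


private lemma sum_fb_eq (b1 b2 : ℕ) (hb1 : 0 < b1) (N : ℕ) :
    (∑ n ∈ Icc 1 N, (fb b1 b2 n : ℝ)) =
      ∑ d ∈ Icc 1 N, ((ArithmeticFunction.moebius d : ℤ) : ℝ) / (d : ℝ) ^ b2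
        * ((N / d ^ b1 : ℕ) : ℝ) := by
  have h1 : ∀ n ∈ Icc 1 N, (fb b1 b2 n : ℝ) =
      ∑ d ∈ Icc 1 N, if d ^ b1 ∣ n then ((ArithmeticFunction.moebius d : ℤ) : ℝ) / (d : ℝ) ^ b2 else 0 := by
    intro n hn
    rw [mem_Icc] at hn
    rw [← Finset.sum_filter]
    unfold fb
    push_cast
    apply Finset.sum_congr _ (fun _ _ => rfl)
    ext d
    simp only [mem_filter, Nat.mem_divisors, mem_Icc]
    constructor
    · rintro ⟨⟨hdn, hn0⟩, hdvd⟩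
      refine ⟨⟨?_, le_trans (Nat.le_of_dvd (by omega) hdn) hn.2⟩, hdvd⟩
      rcases Nat.eq_zero_or_pos d with rfl | hd
      · exact absurd (Nat.eq_zero_of_zero_dvd hdn) hn0
      · omega
    · rintro ⟨⟨h1d, hdN⟩, hdvd⟩
      exact ⟨⟨dvd_trans (dvd_pow_self d hb1.ne') hdvd, by omega⟩, hdvd⟩
  rw [Finset.sum_congr rfl h1, Finset.sum_comm]
  apply Finset.sum_congr rfl
  intro d _
  rw [← Finset.sum_filter, Finset.sum_const, nsmul_eq_mul, mul_comm]
  congr 2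
  have : Icc 1 N = Ioc 0 N := rfl
  rw [this]
  exact Nat.Ioc_filter_dvd_card_eq_div N (d ^ b1)


private lemma mu_abs_le' (d : ℕ) : |((ArithmeticFunction.moebius d : ℤ) : ℝ)| ≤ 1 := by
  rcases eq_or_ne (ArithmeticFunction.moebius d) 0 with h | h
  · simp [h]
  · rcases ArithmeticFunction.moebius_ne_zero_iff_eq_or.mp h with h | h <;> simp [h]

theorem stmt_9 (b1 b2 : ℕ) (hb1 : 0 < b1) (hb2 : 0 < b2) (hb : b1 ≤ b2) :
    ∃ C > 0, ∀ x : ℝ, 2 ≤ x →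
      |(∑ n ∈ Icc 1 ⌊x⌋₊, (fb b1 b2 n : ℝ)) -
          x * ∏' p : Nat.Primes, (1 - 1 / (p : ℝ) ^ (b1 + b2))|
        ≤ C * Real.log x := by
  refine ⟨10, by norm_num, fun x hx => ?_⟩
  have hk2 : 2 ≤ b1 + b2 := by omega
  set k := b1 + b2 with hk
  set N := ⌊x⌋₊ with hN
  have hN2 : 2 ≤ N := Nat.le_floor (by exact_mod_cast hx)
  have hx0 : (0:ℝ) < x := by linarith
  have hxN : (N : ℝ) ≤ x := Nat.floor_le hx0.le
  have hxN1 : x < N + 1 := Nat.lt_floor_add_one x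
  have hNpos : (0:ℝ) < N := by exact_mod_cast (by omega : 0 < N)
  have hlog2 : (0.6931:ℝ) < Real.log x := by
    calc (0.6931:ℝ) < Real.log 2 := by
          have := Real.log_two_gt_d9
          linarith
      _ ≤ Real.log x := Real.log_le_log (by norm_num) hx
  rw [sum_fb_eq b1 b2 hb1 N, euler_aux k hk2]
  set K := ∑' d : ℕ, ((ArithmeticFunction.moebius d : ℤ) : ℝ) / (d : ℝ) ^ k with hK
  set A := ∑ d ∈ Icc 1 N, ((ArithmeticFunction.moebius d : ℤ) : ℝ) / (d : ℝ) ^ b2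
      * (((N / d ^ b1 : ℕ) : ℝ) - x / (d : ℝ) ^ b1) with hA
  have hsplit : (∑ d ∈ Icc 1 N, ((ArithmeticFunction.moebius d : ℤ) : ℝ) / (d : ℝ) ^ b2
        * ((N / d ^ b1 : ℕ) : ℝ)) - x * K
      = A + x * ((∑ d ∈ Icc 1 N, ((ArithmeticFunction.moebius d : ℤ) : ℝ) / (d : ℝ) ^ k) - K) := by
    have h1 : ∑ d ∈ Icc 1 N, ((ArithmeticFunction.moebius d : ℤ) : ℝ) / (d : ℝ) ^ b2
        * ((N / d ^ b1 : ℕ) : ℝ)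
        = A + x * ∑ d ∈ Icc 1 N, ((ArithmeticFunction.moebius d : ℤ) : ℝ) / (d : ℝ) ^ k := by
      rw [hA, Finset.mul_sum, ← Finset.sum_add_distrib]
      apply Finset.sum_congr rfl
      intro d _
      have h2 : x * (((ArithmeticFunction.moebius d : ℤ) : ℝ) / (d : ℝ) ^ k)
          = ((ArithmeticFunction.moebius d : ℤ) : ℝ) / (d : ℝ) ^ b2 * (x / (d : ℝ) ^ b1) := by
        rw [hk, pow_add]
        ring
      rw [h2]
      ring
    rw [h1]
    ring
  rw [hsplit]
  have hAbound : |A| ≤ 1 + Real.log x := by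
    calc |A| ≤ ∑ d ∈ Icc 1 N, ((d:ℝ))⁻¹ := by
          refine (Finset.abs_sum_le_sum_abs _ _).trans (Finset.sum_le_sum ?_)
          intro d hd
          rw [mem_Icc] at hd
          have hd1 : (1:ℝ) ≤ (d:ℝ) := by exact_mod_cast hd.1
          have hd0 : (0:ℝ) < (d:ℝ) := by linarith
          have hdb : (d:ℝ) ≤ (d:ℝ) ^ b2 := by
            calc (d:ℝ) = (d:ℝ) ^ 1 := (pow_one _).symm
              _ ≤ (d:ℝ) ^ b2 := pow_le_pow_right₀ hd1 hb2
          have habs1 : |((N / d ^ b1 : ℕ) : ℝ) - x / (d : ℝ) ^ b1| ≤ 1 := by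
            have hcast : (d:ℝ) ^ b1 = ((d ^ b1 : ℕ) : ℝ) := by push_cast; ring
            have hu : (N / d ^ b1 : ℕ) = ⌊x / ((d ^ b1 : ℕ) : ℝ)⌋₊ :=
              (Nat.floor_div_natCast x (d ^ b1)).symm
            have hm0 : (0:ℝ) < ((d ^ b1 : ℕ) : ℝ) := by
              rw [← hcast]; positivity
            have hv0 : 0 ≤ x / ((d ^ b1 : ℕ) : ℝ) := by positivity
            have h1 : (⌊x / ((d ^ b1 : ℕ) : ℝ)⌋₊ : ℝ) ≤ x / ((d ^ b1 : ℕ) : ℝ) :=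
              Nat.floor_le hv0
            have h2 : x / ((d ^ b1 : ℕ) : ℝ) - 1 < (⌊x / ((d ^ b1 : ℕ) : ℝ)⌋₊ : ℝ) :=
              Nat.sub_one_lt_floor _
            rw [hu, hcast, abs_le]
            constructor <;> linarith
          rw [abs_mul]
          have hmu : |((ArithmeticFunction.moebius d : ℤ) : ℝ) / (d : ℝ) ^ b2| ≤ (d:ℝ)⁻¹ := by
            rw [abs_div, abs_pow, abs_of_nonneg hd0.le, ← one_div]
            exact div_le_div₀ (by norm_num) (mu_abs_le' d) hd0 hdb
          calc |((ArithmeticFunction.moebius d : ℤ) : ℝ) / (d : ℝ) ^ b2|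
                * |((N / d ^ b1 : ℕ) : ℝ) - x / (d : ℝ) ^ b1|
              ≤ (d:ℝ)⁻¹ * 1 := mul_le_mul hmu habs1 (abs_nonneg _) (by positivity)
            _ = (d:ℝ)⁻¹ := mul_one _
      _ = ((harmonic N : ℚ) : ℝ) := by
          rw [harmonic_eq_sum_Icc]
          push_cast
          rfl
      _ ≤ 1 + Real.log N := harmonic_le_one_add_log N
      _ ≤ 1 + Real.log x := by
          have : Real.log N ≤ Real.log x := Real.log_le_log hNpos hxN
          linarith
  have hBbound : |x * ((∑ d ∈ Icc 1 N, ((ArithmeticFunction.moebius d : ℤ) : ℝ) / (d : ℝ) ^ k) - K)|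
      ≤ 3 / 2 := by
    rw [abs_mul, abs_of_pos hx0]
    have h := tail_bound k hk2 N hN2
    rw [abs_sub_comm] at h
    calc x * |(∑ d ∈ Icc 1 N, ((ArithmeticFunction.moebius d : ℤ) : ℝ) / (d : ℝ) ^ k) - K|
        ≤ x * (1 / N) := by
          apply mul_le_mul_of_nonneg_left h hx0.le
      _ ≤ ((N:ℝ) + 1) * (1 / N) := by
          apply mul_le_mul_of_nonneg_right hxN1.le (by positivity)
      _ = 1 + 1 / N := by field_simp
      _ ≤ 3 / 2 := by
          have h1 : (2:ℝ) ≤ N := by exact_mod_cast hN2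
          have h2 : (1:ℝ) / N ≤ 1 / 2 := by
            apply one_div_le_one_div_of_le (by norm_num) h1
          linarith
  calc |A + x * ((∑ d ∈ Icc 1 N, ((ArithmeticFunction.moebius d : ℤ) : ℝ) / (d : ℝ) ^ k) - K)|
      ≤ |A| + |x * ((∑ d ∈ Icc 1 N, ((ArithmeticFunction.moebius d : ℤ) : ℝ) / (d : ℝ) ^ k) - K)| :=
        abs_add_le _ _
    _ ≤ (1 + Real.log x) + 3 / 2 := add_le_add hAbound hBbound
    _ ≤ 10 * Real.log x := by linarith
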